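/- arXiv:1706.04641 — 5 statements merged into one kernel-verified Lean document; each statement's English description precedes it below -/
import Mathlib

section
/- Let H be a subgroup of Equiv.Perm (Fin n), let b : Fin t → Fin n be a base for H, and let φ be a permutation of Fin n. Then there is a unique element ψ of the left coset φH (i.e., ψ = φ · h for some h ∈ H) such that for every χ ∈ φH, the tuple (ψ(b 0), …, ψ(b (t−1))) is lexicographically ≤ the tuple (χ(b 0), …, χ(b (t−1))). In particular this canonical coset element depends only on the coset φH and not on the representative φ. -/
theorem stmt7_exists_min {β : Type*} [PartialOrder β]
    (total : ∀ x y : β, x ≤ y ∨ y ≤ x) {γ : Type*} (f : γ → β)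
    (s : Finset γ) (hs : s.Nonempty) : ∃ m ∈ s, ∀ x ∈ s, f m ≤ f x := by
  classical
  induction s using Finset.cons_induction with
  | empty => exact absurd hs (by simp)
  | cons a s ha ih =>
    rcases s.eq_empty_or_nonempty with rfl | hsne
    · exact ⟨a, by simp⟩
    · obtain ⟨m, hm, hmin⟩ := ih hsne
      rcases total (f a) (f m) with h | h
      · exact ⟨a, by simp, fun x hx => by
          rcases Finset.mem_cons.mp hx with rfl | hx
          · exact le_refl _
          · exact h.trans (hmin x hx)⟩
      · exact ⟨m, Finset.mem_cons_of_mem hm, fun x hx => by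
          rcases Finset.mem_cons.mp hx with rfl | hx
          · exact h
          · exact hmin x hx⟩

theorem stmt7_cosets {n : ℕ} (H : Subgroup (Equiv.Perm (Fin n)))
    (φ φ' : Equiv.Perm (Fin n)) (hφ' : ∃ h ∈ H, φ' = φ * h) (χ : Equiv.Perm (Fin n)) :
    (∃ h ∈ H, χ = φ * h) ↔ (∃ h ∈ H, χ = φ' * h) := by
  obtain ⟨h₀, h₀H, rfl⟩ := hφ'
  constructor
  · rintro ⟨h, hH, rfl⟩
    exact ⟨h₀⁻¹ * h, H.mul_mem (H.inv_mem h₀H) hH, by group⟩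
  · rintro ⟨h, hH, rfl⟩
    exact ⟨h₀ * h, H.mul_mem h₀H hH, by group⟩

/-- Given a subgroup `H` of `Equiv.Perm (Fin n)` with base `b`, every left
coset `φH` contains a unique element whose tuple of images of the base points is
lexicographically minimal over the coset; in particular it depends only on the coset. -/
theorem stmt7 {n t : ℕ} (H : Subgroup (Equiv.Perm (Fin n))) (b : Fin t → Fin n)
    (hbase : ∀ h ∈ H, (∀ i : Fin t, h (b i) = b i) → h = 1)
    (φ : Equiv.Perm (Fin n)) :
    (∃! ψ : Equiv.Perm (Fin n), (∃ h ∈ H, ψ = φ * h) ∧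
      ∀ χ : Equiv.Perm (Fin n), (∃ h ∈ H, χ = φ * h) →
        toLex (fun i => ψ (b i)) ≤ toLex (fun i => χ (b i))) ∧
    (∀ φ' : Equiv.Perm (Fin n), (∃ h ∈ H, φ' = φ * h) →
      ∀ ψ : Equiv.Perm (Fin n),
        (((∃ h ∈ H, ψ = φ * h) ∧
          ∀ χ : Equiv.Perm (Fin n), (∃ h ∈ H, χ = φ * h) →
            toLex (fun i => ψ (b i)) ≤ toLex (fun i => χ (b i))) ↔
        ((∃ h ∈ H, ψ = φ' * h) ∧
          ∀ χ : Equiv.Perm (Fin n), (∃ h ∈ H, χ = φ' * h) →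
            toLex (fun i => ψ (b i)) ≤ toLex (fun i => χ (b i))))) := by
  constructor
  · -- existence and uniqueness of the minimum
    classical
    have total : ∀ x y : Lex (Fin t → Fin n), x ≤ y ∨ y ≤ x := by
      intro x y
      rcases @trichotomous_of _ _ (Pi.isTrichotomous_lex (fun a c : Fin t => a < c)
          (@fun _ => fun a c : Fin n => a < c) wellFounded_lt)
          (ofLex x) (ofLex y) with h | h | h
      · exact Or.inl (le_of_lt h)
      · exact Or.inl (le_of_eq (by exact congrArg toLex h))
      · exact Or.inr (le_of_lt h)
    obtain ⟨ψ, hψmem, hψmin⟩ := stmt7_exists_min total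
      (fun ψ : Equiv.Perm (Fin n) => toLex (fun i => ψ (b i)))
      (Finset.univ.filter (fun χ : Equiv.Perm (Fin n) => ∃ h ∈ H, χ = φ * h))
      ⟨φ, Finset.mem_filter.mpr ⟨Finset.mem_univ _, 1, H.one_mem, by group⟩⟩
    simp only [Finset.mem_filter, Finset.mem_univ, true_and] at hψmem hψmin
    refine ⟨ψ, ⟨hψmem, fun χ hχ => hψmin χ hχ⟩, ?_⟩
    rintro ψ' ⟨hψ'mem, hψ'min⟩
    have h1 := le_antisymm (hψ'min ψ hψmem) (hψmin ψ' hψ'mem)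
    have h2 : ∀ i, ψ' (b i) = ψ (b i) := fun i => congrFun (toLex.injective h1) i
    obtain ⟨h, hH, rfl⟩ := hψmem
    obtain ⟨h', h'H, rfl⟩ := hψ'mem
    have key : h⁻¹ * h' = 1 := by
      apply hbase _ (H.mul_mem (H.inv_mem hH) h'H)
      intro i
      have := h2 i
      simp only [Equiv.Perm.mul_apply] at this ⊢
      have : h' (b i) = h (b i) := (φ.injective this)
      rw [this]; simp
    have : h' = h := by
      have := congrArg (h * ·) key
      simpa [mul_assoc] using this
    rw [this]
  · intro φ' hφ' ψ
    have hc := stmt7_cosets H φ φ' hφ'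
    constructor
    · rintro ⟨hmem, hmin⟩
      exact ⟨(hc ψ).mp hmem, fun χ hχ => hmin χ ((hc χ).mpr hχ)⟩
    · rintro ⟨hmem, hmin⟩
      exact ⟨(hc ψ).mpr hmem, fun χ hχ => hmin χ ((hc χ).mp hχ)⟩
end

section
/- Let H be a subgroup of Equiv.Perm (Fin n), let b : Fin t → Fin n be a base for H, let φ be a permutation of Fin n, and let ψ ∈ φH. Then ψ is the element of the coset φH whose tuple of base images (ψ(b 0), …, ψ(b (t−1))) is lexicographically minimal over φH if and only if for every i < t, ψ(b i) is the minimum of the set { χ(b i) | χ ∈ φH and χ(b j) = ψ(b j) for all j < i }. This is the correctness of the Find-First-Isomorphism procedure, which minimizes the images of the base points one at a time using coset representatives of the pointwise stabilizer chain. -/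
/-- Correctness of Find-First-Isomorphism: `ψ ∈ φH` has lexicographically
minimal base-image tuple over the coset `φH` iff for every `i`, `ψ (b i)` is the minimum
of `χ (b i)` over those `χ ∈ φH` agreeing with `ψ` on the base points below `i`. -/
theorem stmt8 {n t : ℕ} (H : Subgroup (Equiv.Perm (Fin n))) (b : Fin t → Fin n)
    (hbase : ∀ h ∈ H, (∀ i : Fin t, h (b i) = b i) → h = 1)
    (φ ψ : Equiv.Perm (Fin n)) (hψ : ∃ h ∈ H, ψ = φ * h) :
    (∀ χ : Equiv.Perm (Fin n), (∃ h ∈ H, χ = φ * h) →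
        toLex (fun i => ψ (b i)) ≤ toLex (fun i => χ (b i))) ↔
      (∀ i : Fin t,
        IsLeast {y : Fin n | ∃ χ : Equiv.Perm (Fin n), (∃ h ∈ H, χ = φ * h) ∧
          (∀ j < i, χ (b j) = ψ (b j)) ∧ χ (b i) = y} (ψ (b i))) := by
  constructor
  · intro hmin i
    constructor
    · exact ⟨ψ, hψ, fun j _ => rfl, rfl⟩
    · rintro y ⟨χ, hχ, hagree, rfl⟩
      by_contra hlt
      push_neg at hlt
      have hl : toLex (fun j => χ (b j)) < toLex (fun j => ψ (b j)) :=
        ⟨i, fun j hj => hagree j hj, hlt⟩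
      exact absurd (hmin χ hχ) (not_le_of_gt hl)
  · intro hleast χ hχ
    rcases @trichotomous _ _ (Pi.isTrichotomous_lex (· < ·) (fun {_} => (· < ·))
        (IsWellFounded.wf (α := Fin t) (r := (· < ·)))) (fun i => ψ (b i)) (fun i => χ (b i)) with h | h | h
    · exact le_of_lt (show toLex (fun i => ψ (b i)) < toLex (fun i => χ (b i)) from h)
    · exact le_of_eq (congrArg toLex h)
    · obtain ⟨i, hagree, hlt⟩ := h
      exact absurd ((hleast i).2 ⟨χ, hχ, fun j hj => hagree j hj, rfl⟩) (not_le_of_gt hlt)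
end

section
/- Every subgroup H of the permutation group of a finite type α has a base of size at most log₂ |H|: there exist t ≤ Nat.log 2 (Fintype.card H) and a family b : Fin t → α such that the identity is the only element of H fixing b i for every i. -/
private theorem aux {α : Type*} [Fintype α] [DecidableEq α] (n : ℕ) :
    ∀ H : Subgroup (Equiv.Perm α), Nat.card H ≤ n →
    ∃ t : ℕ, t ≤ Nat.log 2 (Nat.card H) ∧
      ∃ b : Fin t → α, ∀ h ∈ H, (∀ i : Fin t, h (b i) = b i) → h = 1 := by
  induction n with
  | zero => intro H hH
            have : (Nat.card H) ≠ 0 := Nat.card_ne_zero.mpr ⟨⟨1, H.one_mem⟩, inferInstance⟩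
            omega
  | succ n ih =>
    intro H hH
    by_cases htriv : ∀ h ∈ H, h = 1
    · exact ⟨0, Nat.zero_le _, Fin.elim0, fun h hh _ => htriv h hh⟩
    · push_neg at htriv
      obtain ⟨g, hgH, hg1⟩ := htriv
      obtain ⟨a, ha⟩ : ∃ a, g a ≠ a := by
        by_contra hc
        push_neg at hc
        exact hg1 (Equiv.ext hc)
      -- stabilizer of a in H
      set K : Subgroup H := MulAction.stabilizer H a with hK
      have hKne : K ≠ ⊤ := by
        intro htop
        have : (⟨g, hgH⟩ : H) ∈ K := htop ▸ Subgroup.mem_top _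
        exact ha this
      have hidx2 : 2 ≤ K.index := by
        have h1 : K.index ≠ 1 := fun h => hKne (Subgroup.index_eq_one.mp h)
        have h0 : K.index ≠ 0 := Subgroup.index_ne_zero_of_finite
        omega
      have hcard : Nat.card K * K.index = Nat.card H := Subgroup.card_mul_index K
      have hKpos : 0 < Nat.card K := Nat.card_pos
      have h2K : Nat.card K * 2 ≤ Nat.card H := by nlinarith
      set K' : Subgroup (Equiv.Perm α) := K.map H.subtype with hK'
      have hcardK' : Nat.card K' = Nat.card K := Nat.card_eq_of_bijective _
        (Subgroup.equivMapOfInjective K H.subtype H.subtype_injective).symm.bijective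
      have hlt : Nat.card K' ≤ n := by omega
      obtain ⟨t, ht, b, hb⟩ := ih K' hlt
      refine ⟨t + 1, ?_, Fin.cons a b, ?_⟩
      · calc t + 1 ≤ Nat.log 2 (Nat.card K') + 1 := by omega
          _ = Nat.log 2 (Nat.card K' * 2) := (Nat.log_mul_base one_lt_two (by omega)).symm
          _ ≤ Nat.log 2 (Nat.card H) := Nat.log_mono_right (by omega)
      · intro h hh hfix
        have hK'mem : h ∈ K' := by
          refine Subgroup.mem_map.mpr ⟨⟨h, hh⟩, ?_, rfl⟩
          show (⟨h, hh⟩ : H) • a = a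
          have := hfix 0
          simpa [Fin.cons] using this
        exact hb h hK'mem (fun i => by simpa using hfix i.succ)

/-- Every subgroup of the permutation group of a finite type has a base of
size at most log₂ of its order. -/
theorem stmt9 {α : Type*} [Fintype α] [DecidableEq α] (H : Subgroup (Equiv.Perm α)) :
    ∃ t : ℕ, t ≤ Nat.log 2 (Nat.card H) ∧
      ∃ b : Fin t → α, ∀ h ∈ H, (∀ i : Fin t, h (b i) = b i) → h = 1 := by
  exact aux (Nat.card H) H le_rfl
end

section
/- Let A be a finite set in a type α and let g : α → α → α satisfy g x y ∈ {x, y} and g x y = g y x for all x, y ∈ A. Then there exists a subset S ⊆ A with |S| ≤ ⌈log₂(|A| + 1)⌉ such that for every x ∈ A there is some s ∈ S with g x s = x. (This is the advice-set construction used to place an NP-complete language in coNP/poly: S is a small set of elements of L such that every element of L is 'selected' against some member of S.) -/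
private lemma stmt11_aux {α : Type*} [DecidableEq α] :
    ∀ (n : ℕ) (A : Finset α) (g : α → α → α), A.card ≤ n →
    (∀ x ∈ A, ∀ y ∈ A, g x y = x ∨ g x y = y) →
    (∀ x ∈ A, ∀ y ∈ A, g x y = g y x) →
    ∃ S ⊆ A, S.card ≤ Nat.clog 2 (A.card + 1) ∧
      ∀ x ∈ A, ∃ s ∈ S, g x s = x := by
  intro n
  induction n with
  | zero =>
    intro A g hcard _ _
    have : A = ∅ := Finset.card_eq_zero.mp (Nat.le_zero.mp hcard)
    subst this
    exact ⟨∅, Finset.Subset.refl _, by simp, by simp⟩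
  | succ n ih =>
    intro A g hcard hsel hsym
    rcases A.eq_empty_or_nonempty with rfl | hA
    · exact ⟨∅, Finset.Subset.refl _, by simp, by simp⟩
    set N := A.card with hN
    have hN1 : 1 ≤ N := Finset.card_pos.mpr hA
    -- counting: total "wins" is N(N+1)/2, so some s is beaten by ≥ (N+1)/2 elements
    have hswap : ∑ s ∈ A, ∑ x ∈ A, (if g x s = x then (1:ℕ) else 0)
        = ∑ s ∈ A, ∑ x ∈ A, (if g x s = s then (1:ℕ) else 0) := by
      rw [Finset.sum_comm]
      refine Finset.sum_congr rfl fun s hs => Finset.sum_congr rfl fun x hx => ?_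
      rw [hsym s hs x hx]
    have hdiag : ∀ s ∈ A,
        (∑ x ∈ A, ((if g x s = x then (1:ℕ) else 0) + (if g x s = s then 1 else 0)))
        = N + 1 := by
      intro s hs
      have : ∀ x ∈ A, ((if g x s = x then (1:ℕ) else 0) + (if g x s = s then 1 else 0))
          = if x = s then 2 else 1 := by
        intro x hx
        rcases hsel x hx s hs with h | h
        · by_cases hxs : x = s
          · subst hxs; simp [h]
          · have : ¬ g x s = s := by rw [h]; exact hxs
            simp [h, this, hxs]
        · by_cases hxs : x = s
          · subst hxs; simp [h]
          · have : ¬ g x s = x := by rw [h]; intro hc; exact hxs hc.symm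
            simp [h, this, hxs]
            exact fun hc => hxs hc.symm
      rw [Finset.sum_congr rfl this]
      calc (∑ x ∈ A, if x = s then (2:ℕ) else 1)
          = ∑ x ∈ A, ((if x = s then (1:ℕ) else 0) + 1) :=
            Finset.sum_congr rfl (fun x _ => by split <;> simp)
        _ = N + 1 := by
            rw [Finset.sum_add_distrib, Finset.sum_ite_eq' A s (fun _ => 1)]
            simp [hs, hN]
            omega
    have htotal : 2 * ∑ s ∈ A, ∑ x ∈ A, (if g x s = x then (1:ℕ) else 0)
        = N * (N + 1) := by
      have := Finset.sum_congr rfl hdiag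
      rw [Finset.sum_const, smul_eq_mul] at this
      calc 2 * ∑ s ∈ A, ∑ x ∈ A, (if g x s = x then (1:ℕ) else 0)
          = (∑ s ∈ A, ∑ x ∈ A, (if g x s = x then (1:ℕ) else 0))
            + ∑ s ∈ A, ∑ x ∈ A, (if g x s = s then (1:ℕ) else 0) := by
            rw [← hswap]; ring
        _ = ∑ s ∈ A, ∑ x ∈ A, ((if g x s = x then (1:ℕ) else 0) + (if g x s = s then 1 else 0)) := by
            rw [← Finset.sum_add_distrib]
            exact Finset.sum_congr rfl fun s _ => (Finset.sum_add_distrib).symm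
        _ = N * (N + 1) := this
    have hcf : ∀ s, (A.filter (fun x => g x s = x)).card
        = ∑ x ∈ A, (if g x s = x then (1:ℕ) else 0) := by
      intro s; rw [Finset.card_filter]
    have hexists : ∃ s ∈ A, N + 1 ≤ 2 * (A.filter (fun x => g x s = x)).card := by
      by_contra hcon
      push_neg at hcon
      have hle : ∀ s ∈ A, 2 * ∑ x ∈ A, (if g x s = x then (1:ℕ) else 0) ≤ N := by
        intro s hs
        have := hcon s hs
        rw [hcf s] at this
        omega
      have : 2 * ∑ s ∈ A, ∑ x ∈ A, (if g x s = x then (1:ℕ) else 0) ≤ N * N := by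
        rw [Finset.mul_sum]
        calc ∑ s ∈ A, 2 * ∑ x ∈ A, (if g x s = x then (1:ℕ) else 0)
            ≤ ∑ _s ∈ A, N := Finset.sum_le_sum hle
          _ = N * N := by rw [Finset.sum_const, smul_eq_mul]
      rw [htotal] at this
      nlinarith
    obtain ⟨s, hsA, hsbig⟩ := hexists
    set B := A.filter (fun x => ¬ g x s = x) with hB
    have hBsub : B ⊆ A := Finset.filter_subset _ _
    have hsplit : (A.filter (fun x => g x s = x)).card + B.card = N :=
      Finset.card_filter_add_card_filter_not _
    have hBsmall : 2 * B.card + 1 ≤ N := by omega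
    have hBn : B.card ≤ n := by omega
    obtain ⟨S', hS'sub, hS'card, hS'cov⟩ := ih B g hBn
      (fun x hx y hy => hsel x (hBsub hx) y (hBsub hy))
      (fun x hx y hy => hsym x (hBsub hx) y (hBsub hy))
    refine ⟨insert s S', ?_, ?_, ?_⟩
    · intro x hx
      rcases Finset.mem_insert.mp hx with rfl | hx
      · exact hsA
      · exact hBsub (hS'sub hx)
    · have h1 : (insert s S').card ≤ S'.card + 1 := Finset.card_insert_le _ _
      have h2 : Nat.clog 2 (N + 1) = Nat.clog 2 ((N + 1 + 2 - 1) / 2) + 1 :=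
        Nat.clog_of_two_le (by norm_num) (by omega)
      have h3 : B.card + 1 ≤ (N + 1 + 2 - 1) / 2 := by omega
      have h4 : Nat.clog 2 (B.card + 1) ≤ Nat.clog 2 ((N + 1 + 2 - 1) / 2) :=
        Nat.clog_mono_right 2 h3
      omega
    · intro x hx
      by_cases hgx : g x s = x
      · exact ⟨s, Finset.mem_insert_self _ _, hgx⟩
      · obtain ⟨t, htS, hgt⟩ := hS'cov x (Finset.mem_filter.mpr ⟨hx, hgx⟩)
        exact ⟨t, Finset.mem_insert_of_mem htS, hgt⟩

/-- Advice-set construction: for a symmetric selector `g` on a finite set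
`A`, there is a subset `S ⊆ A` of size at most ⌈log₂(|A|+1)⌉ such that every `x ∈ A` is
selected against some member of `S`. -/
theorem stmt11 {α : Type*} [DecidableEq α] (A : Finset α) (g : α → α → α)
    (hsel : ∀ x ∈ A, ∀ y ∈ A, g x y = x ∨ g x y = y)
    (hsym : ∀ x ∈ A, ∀ y ∈ A, g x y = g y x) :
    ∃ S ⊆ A, S.card ≤ Nat.clog 2 (A.card + 1) ∧
      ∀ x ∈ A, ∃ s ∈ S, g x s = x :=
  stmt11_aux A.card A g le_rfl hsel hsym
end

section
/- Let G be a simple graph on a finite linearly ordered vertex type V, let s ≠ t with t reachable from s, and let p be the unique walk from s to t of length G.dist s t whose support is lexicographically least. Write p as an edge from s to a vertex v followed by a walk q from v to t. Then v is the minimum of the set { u ∈ V | G.Adj s u and G.dist u t + 1 = G.dist s t }, and q is the unique walk from v to t of length G.dist v t whose support is lexicographically least. (This is the correctness of the greedy recursion computing the canonical shortest path in the pseudo-deterministic NL algorithm.) -/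
open SimpleGraph

private lemma walk_eq_of_support_eq {V : Type*} {G : SimpleGraph V} :
    ∀ {u t : V} (p r : G.Walk u t), p.support = r.support → p = r
  | _, _, .nil, .nil, _ => rfl
  | _, _, .nil, .cons h r, hs => by
      rw [Walk.support_nil, Walk.support_cons] at hs
      injection hs with _ h2
      exact absurd h2.symm r.support_ne_nil
  | _, _, .cons h p, .nil, hs => by
      rw [Walk.support_nil, Walk.support_cons] at hs
      injection hs with _ h2
      exact absurd h2 p.support_ne_nil
  | _, _, .cons (v := w₁) h₁ p, .cons (v := w₂) h₂ r, hs => by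
      rw [Walk.support_cons, Walk.support_cons] at hs
      injection hs with _ hs2
      have hw : w₁ = w₂ := by
        have h1 := congrArg List.head? hs2
        rw [p.support_eq_cons, r.support_eq_cons] at h1
        simpa only [List.head?_cons, Option.some.injEq] using h1
      subst hw
      rw [walk_eq_of_support_eq p r hs2]

/-- Greedy recursion for the canonical shortest path: if
`Walk.cons hadj q` (an edge from `s` to `v` followed by `q : Walk v t`) is the
lexicographically-least shortest walk from `s` to `t` (with `s ≠ t`), then `v` is the
least neighbor of `s` lying on a shortest path, and `q` is the unique
lexicographically-least shortest walk from `v` to `t`. -/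
theorem stmt13 {V : Type*} [Fintype V] [LinearOrder V] (G : SimpleGraph V)
    (s t : V) (hne : s ≠ t) (hreach : G.Reachable s t)
    (v : V) (hadj : G.Adj s v) (q : G.Walk v t)
    (hlen : (SimpleGraph.Walk.cons hadj q).length = G.dist s t)
    (hmin : ∀ r : G.Walk s t, r.length = G.dist s t →
      (SimpleGraph.Walk.cons hadj q).support = r.support ∨
        List.Lex (· < ·) (SimpleGraph.Walk.cons hadj q).support r.support) :
    IsLeast {u : V | G.Adj s u ∧ G.dist u t + 1 = G.dist s t} v ∧
    (q.length = G.dist v t ∧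
      ∀ r : G.Walk v t, r.length = G.dist v t →
        q.support = r.support ∨ List.Lex (· < ·) q.support r.support) ∧
    (∀ q' : G.Walk v t,
      (q'.length = G.dist v t ∧
        ∀ r : G.Walk v t, r.length = G.dist v t →
          q'.support = r.support ∨ List.Lex (· < ·) q'.support r.support) →
      q' = q) := by
  have hreachv : G.Reachable v t := (hadj.symm.reachable).trans hreach
  obtain ⟨w₀, hw₀⟩ := hreachv.exists_walk_length_eq_dist
  rw [Walk.length_cons] at hlen
  have h1 : G.dist v t ≤ q.length := SimpleGraph.dist_le q
  have h2 : G.dist s t ≤ G.dist v t + 1 := by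
    have := SimpleGraph.dist_le (Walk.cons hadj w₀)
    rwa [Walk.length_cons, hw₀] at this
  have hqlen : q.length = G.dist v t := by omega
  have hvd : G.dist v t + 1 = G.dist s t := by omega
  -- key: q is lex-min among shortest walks v→t
  have hqmin : ∀ r : G.Walk v t, r.length = G.dist v t →
      q.support = r.support ∨ List.Lex (· < ·) q.support r.support := by
    intro r hr
    have hrlen : (Walk.cons hadj r).length = G.dist s t := by
      rw [Walk.length_cons, hr]; omega
    rcases hmin _ hrlen with h | h
    · left
      simpa only [Walk.support_cons, List.cons.injEq, true_and] using h
    · right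
      simp only [Walk.support_cons] at h
      cases h with
      | rel h => exact absurd h (lt_irrefl s)
      | cons h => exact h
  refine ⟨⟨⟨hadj, hvd⟩, ?_⟩, ⟨hqlen, hqmin⟩, ?_⟩
  · rintro u ⟨huadj, hud⟩
    have hru : G.Reachable u t := (huadj.symm.reachable).trans hreach
    obtain ⟨w, hw⟩ := hru.exists_walk_length_eq_dist
    have hwlen : (Walk.cons huadj w).length = G.dist s t := by
      rw [Walk.length_cons, hw]; omega
    have hq' : q.support = v :: q.support.tail := q.support_eq_cons
    have hw' : w.support = u :: w.support.tail := w.support_eq_cons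
    rcases hmin _ hwlen with h | h
    · simp only [Walk.support_cons, List.cons.injEq, true_and] at h
      rw [hq', hw'] at h
      exact le_of_eq (List.cons.injEq _ _ _ _ ▸ h).1
    · simp only [Walk.support_cons] at h
      cases h with
      | rel h => exact absurd h (lt_irrefl s)
      | cons h =>
        rw [hq', hw'] at h
        cases h with
        | rel h => exact le_of_lt h
        | cons h => exact le_of_eq rfl
  · rintro q' ⟨hq'len, hq'min⟩
    rcases hqmin q' hq'len with h | h
    · exact (walk_eq_of_support_eq q q' h).symm
    · rcases hq'min q hqlen with h' | h'
      · exact walk_eq_of_support_eq q' q h'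
      · exact absurd h (asymm h')
end
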